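/- Let X be a pre-Riesz space and let P and Q be band projections on X. Then the following assertions are equivalent: (i) PQ = 0; (ii) PX ∩ QX = {0}; (iii) every element of PX is disjoint to every element of QX. -/

import Mathlib

set_option linter.unusedSectionVars false


open Pointwise

variable {X : Type*} [AddCommGroup X] [PartialOrder X] [IsOrderedAddMonoid X] [Module ℝ X]
    [PosSMulStrictMono ℝ X]

/-- Two elements of an ordered vector space are disjoint if the sets `{x+y, -x-y}` and
`{x-y, y-x}` have the same set of upper bounds. -/
def UDisjoint (x y : X) : Prop :=
  upperBounds ({x + y, -x - y} : Set X) = upperBounds ({x - y, y - x} : Set X)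

/-- The disjoint complement `S^⊥` of a set `S`. -/
def dComp (S : Set X) : Set X := {x : X | ∀ s ∈ S, UDisjoint x s}

/-- A band: a set equal to its double disjoint complement. -/
def IsBand (B : Set X) : Prop := B = dComp (dComp B)

/-- A projection band: a band `B` with `B ∩ B^⊥ = {0}` and `B + B^⊥ = X`. -/
def IsProjBand (B : Set X) : Prop :=
  IsBand B ∧ B ∩ dComp B = {0} ∧ ∀ x : X, ∃ b ∈ B, ∃ c ∈ dComp B, x = b + c

/-- A positive linear operator. -/
def IsPosMap (T : X →ₗ[ℝ] X) : Prop := ∀ x : X, 0 ≤ x → 0 ≤ T x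

/-- A band projection: a linear projection whose range is a projection band and whose
kernel is the disjoint complement of the range. -/
def IsBandProj (P : X →ₗ[ℝ] X) : Prop :=
  P ∘ₗ P = P ∧ IsProjBand (Set.range ⇑P) ∧ (LinearMap.ker P : Set X) = dComp (Set.range ⇑P)

/-- A pre-Riesz space: for every nonempty finite `A ⊆ X` and every `x`, if the upper bounds
of `x + A` are contained in the upper bounds of `A`, then `x ≥ 0`. -/
def IsPreRiesz (X : Type*) [AddCommGroup X] [PartialOrder X] [IsOrderedAddMonoid X] [Module ℝ X]
    [PosSMulStrictMono ℝ X] : Prop :=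
  ∀ (A : Set X) (x : X), A.Finite → A.Nonempty →
    upperBounds ((x + ·) '' A) ⊆ upperBounds A → 0 ≤ x

lemma mem_ub_pair {a b u : X} : u ∈ upperBounds ({a, b} : Set X) ↔ a ≤ u ∧ b ≤ u := by
  simp [upperBounds]

lemma udisjoint_iff {x y : X} :
    UDisjoint x y ↔ ∀ u : X, (x + y ≤ u ∧ -x - y ≤ u) ↔ (x - y ≤ u ∧ y - x ≤ u) := by
  unfold UDisjoint
  rw [Set.ext_iff]
  exact forall_congr' fun u => by rw [mem_ub_pair, mem_ub_pair]

lemma shift_le {a b c d : X} (h : a ≤ b) (he : d - c = b - a) : c ≤ d := by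
  have h1 : 0 ≤ b - a := sub_nonneg.mpr h
  rw [← he] at h1
  exact sub_nonneg.mp h1

/-- Key step: if `x ⊥ y`, `(x+y) ⊥ w` and `t` dominates `±(x+w)`, then `t ≥ x - w`. -/
lemma lemG (hX : IsPreRiesz X) {x y w t : X} (D1 : UDisjoint x y) (D2 : UDisjoint (x + y) w)
    (ht1 : x + w ≤ t) (ht2 : -x - w ≤ t) : x - w ≤ t := by
  rw [udisjoint_iff] at D1 D2
  set e := t + w - x with he
  have key : (0 : X) ≤ e := by
    apply hX {y - e, -y - e} e (Set.toFinite _) ⟨y - e, Set.mem_insert _ _⟩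
    intro u hu
    have e1 : e + (y - e) = y := by abel
    have e2 : e + (-y - e) = -y := by abel
    rw [Set.image_insert_eq, Set.image_singleton, e1, e2, mem_ub_pair] at hu
    obtain ⟨hu1, hu2⟩ := hu
    have hv1 : (x + y) + w ≤ u + t := shift_le (add_le_add hu1 ht1) (by abel)
    have hv2 : -(x + y) - w ≤ u + t := shift_le (add_le_add hu2 ht2) (by abel)
    obtain ⟨hv3, hv4⟩ := (D2 (u + t)).mp ⟨hv1, hv2⟩
    have hw1 : x + y ≤ u + t + w := shift_le hv3 (by abel)
    have hw2 : -x - y ≤ u + t + w := shift_le hv2 (by abel)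
    obtain ⟨hw3, hw4⟩ := (D1 (u + t + w)).mp ⟨hw1, hw2⟩
    rw [mem_ub_pair]
    exact ⟨shift_le hv3 (by rw [he]; abel), shift_le hw3 (by rw [he]; abel)⟩
  exact shift_le key (by rw [he]; abel)

lemma udisjoint_symm {x y : X} (h : UDisjoint x y) : UDisjoint y x := by
  rw [udisjoint_iff] at h ⊢
  intro u; have h' := h u; abel_nf at h' ⊢; tauto

lemma udisjoint_negL {x y : X} (h : UDisjoint x y) : UDisjoint (-x) y := by
  rw [udisjoint_iff] at h ⊢
  intro u; have h' := h u; abel_nf at h' ⊢; tauto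

lemma udisjoint_negR {x y : X} (h : UDisjoint x y) : UDisjoint x (-y) := by
  rw [udisjoint_iff] at h ⊢
  intro u; have h' := h u; abel_nf at h' ⊢; tauto

lemma udisjoint_congr {x x' y y' : X} (hx : x = x') (hy : y = y') :
    UDisjoint x y ↔ UDisjoint x' y' := by rw [hx, hy]

/-- If `a ⊥ b` and `(a+b) ⊥ w`, then `a ⊥ w`. -/
lemma lemL (hX : IsPreRiesz X) {a b w : X} (D1 : UDisjoint a b) (D2 : UDisjoint (a + b) w) :
    UDisjoint a w := by
  have D1' : UDisjoint (-a) (-b) := udisjoint_negR (udisjoint_negL D1)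
  have D2n : UDisjoint (-a + -b) (-w) :=
    (udisjoint_congr (by abel) rfl).mpr (udisjoint_negR (udisjoint_negL D2))
  have D2nL : UDisjoint (-a + -b) w :=
    (udisjoint_congr (by abel) rfl).mpr (udisjoint_negL D2)
  have D2nR : UDisjoint (a + b) (-w) := udisjoint_negR D2
  rw [udisjoint_iff]
  intro u
  constructor
  · rintro ⟨h1, h2⟩
    refine ⟨lemG hX D1 D2 h1 h2, ?_⟩
    have g := lemG (t := u) hX D1' D2n (shift_le h2 (by abel)) (shift_le h1 (by abel))
    exact shift_le g (by abel)
  · rintro ⟨h1, h2⟩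
    constructor
    · have g := lemG (t := u) hX D1 D2nR (shift_le h1 (by abel)) (shift_le h2 (by abel))
      exact shift_le g (by abel)
    · have g := lemG (t := u) hX D1' D2nL (shift_le h2 (by abel)) (shift_le h1 (by abel))
      exact shift_le g (by abel)

lemma eq_zero_of_udisjoint_self {z : X} (h : UDisjoint z z) : z = 0 := by
  rw [udisjoint_iff] at h
  obtain ⟨h1, h2⟩ := (h 0).mpr ⟨by simp, by simp⟩
  have h3 : (0 : X) ≤ z + z := shift_le h2 (by abel)
  have h4 : z + z = 0 := le_antisymm h1 h3
  have h5 : (2 : ℝ) • z = 0 := by rw [two_smul]; exact h4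
  calc z = (1 : ℝ) • z := (one_smul ℝ z).symm
    _ = ((1/2 : ℝ) * 2) • z := by norm_num
    _ = (1/2 : ℝ) • ((2 : ℝ) • z) := mul_smul _ _ _
    _ = 0 := by rw [h5, smul_zero]

/-- For band projections `P` and `Q`: `PQ = 0` iff `PX ∩ QX = {0}` iff `PX ⊥ QX`. -/
theorem stmt_11 (hX : IsPreRiesz X) (P Q : X →ₗ[ℝ] X)
    (hP : IsBandProj P) (hQ : IsBandProj Q) :
    [P ∘ₗ Q = 0,
     Set.range ⇑P ∩ Set.range ⇑Q = {0},
     ∀ x ∈ Set.range ⇑P, ∀ y ∈ Set.range ⇑Q, UDisjoint x y].TFAE := by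
  obtain ⟨hPP, ⟨hPband, hPint, -⟩, hPker⟩ := hP
  obtain ⟨hQQ, ⟨hQband, hQint, -⟩, hQker⟩ := hQ
  tfae_have 1 → 3 := by
    intro h x hx y hy
    obtain ⟨z, hz⟩ := hy
    have hy0 : P y = 0 := by
      rw [← hz, ← LinearMap.comp_apply, h, LinearMap.zero_apply]
    have hym : y ∈ dComp (Set.range ⇑P) := by
      rw [← hPker]
      exact LinearMap.mem_ker.mpr hy0
    exact udisjoint_symm (hym x hx)
  tfae_have 3 → 2 := by
    intro h
    ext z
    simp only [Set.mem_inter_iff, Set.mem_singleton_iff]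
    constructor
    · rintro ⟨h1, h2⟩
      exact eq_zero_of_udisjoint_self (h z h1 z h2)
    · rintro rfl
      exact ⟨⟨0, map_zero P⟩, ⟨0, map_zero Q⟩⟩
  tfae_have 2 → 1 := by
    intro h2
    ext z
    simp only [LinearMap.comp_apply, LinearMap.zero_apply]
    set v := Q z with hv
    have huB : P v ∈ Set.range ⇑P := ⟨v, rfl⟩
    have hvC : v ∈ Set.range ⇑Q := ⟨z, rfl⟩
    have hyk : P (v - P v) = 0 := by
      have hPPv : P (P v) = P v := by
        rw [← LinearMap.comp_apply, hPP]
      rw [map_sub, hPPv, sub_self]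
    have hyd : v - P v ∈ dComp (Set.range ⇑P) := by
      rw [← hPker]
      exact LinearMap.mem_ker.mpr hyk
    have hd1 : UDisjoint (P v) (v - P v) := by
      have hmem : P v ∈ dComp (dComp (Set.range ⇑P)) := hPband ▸ huB
      exact hmem _ hyd
    have huC : P v ∈ Set.range ⇑Q := by
      rw [hQband]
      intro w hw
      have hvw : UDisjoint v w := (hQband ▸ hvC) w hw
      exact lemL hX hd1 ((udisjoint_congr (by abel) rfl).mpr hvw)
    have hz0 : P v ∈ ({0} : Set X) := h2 ▸ Set.mem_inter huB huC
    exact hz0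
  tfae_finish
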